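/- Under the bandwagon rating process, for 1 ≤ m < n, the conditional bias of the sample mean satisfies E[p̄_n - p | p̄_m] = (p̄_m - p) · Π_{i=m+1}^{n} (1 - λ_i/i). -/

import Mathlib

open MeasureTheory ProbabilityTheory Finset Filter

/-- Sample mean of the first `n` ratings (ratings are indexed from 1). -/
noncomputable def pbar {Ω : Type*} (r : ℕ → Ω → ℝ) (n : ℕ) (ω : Ω) : ℝ :=
  (∑ i ∈ Finset.Icc 1 n, r i ω) / n

/-- σ-algebra generated by the first `n` ratings. -/
def ratingsAlg {Ω : Type*} (r : ℕ → Ω → ℝ) (n : ℕ) : MeasurableSpace Ω :=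
  ⨆ i ∈ Finset.Icc 1 n, MeasurableSpace.comap (r i) (inferInstance : MeasurableSpace ℝ)

/-- The bandwagon rating process of Xie et al., as used in the paper. -/
structure Bandwagon {Ω : Type*} [MeasurableSpace Ω] (μ : Measure Ω)
    (p : ℝ) (lam : ℕ → ℝ) (r : ℕ → Ω → ℝ) : Prop where
  prob : IsProbabilityMeasure μ
  hp : 0 < p ∧ p < 1
  hlam1 : lam 1 = 1
  hlam_nonneg : ∀ n, 1 ≤ n → 0 ≤ lam n
  hlam_mono : ∀ n, 2 ≤ n → lam n ≤ lam (n - 1)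
  hmeas : ∀ n, Measurable (r n)
  hbin : ∀ n, 1 ≤ n → ∀ ω, r n ω = 0 ∨ r n ω = 1
  hfirst : ∫ ω, r 1 ω ∂μ = p
  hcond : ∀ n, 2 ≤ n →
    μ[r n | ratingsAlg r (n - 1)] =ᵐ[μ]
      fun ω => lam n * p + (1 - lam n) * pbar r (n - 1) ω

/-- Affine-corrected rating `r̂ᵢ`. -/
noncomputable def rhat {Ω : Type*} (r : ℕ → Ω → ℝ) (lam : ℕ → ℝ) (i : ℕ) (ω : Ω) : ℝ :=
  (r i ω - (1 - lam i) * pbar r (i - 1) ω) / lam i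

section Aux

variable {Ω : Type*} [mΩ : MeasurableSpace Ω] {μ : Measure Ω} {p : ℝ} {lam : ℕ → ℝ} {r : ℕ → Ω → ℝ}

lemma ratingsAlg_le_ambient (hmeas : ∀ n, Measurable (r n)) (n : ℕ) :
    ratingsAlg r n ≤ mΩ :=
  iSup₂_le fun i _ => (hmeas i).comap_le

lemma measurable_pbar_ratingsAlg (r : ℕ → Ω → ℝ) {m n : ℕ} (h : m ≤ n) :
    Measurable[ratingsAlg r n] (pbar r m) := by
  apply Measurable.div_const
  apply Finset.measurable_sum
  intro i hi
  have hle : MeasurableSpace.comap (r i) inferInstance ≤ ratingsAlg r n := by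
    refine le_iSup₂ (f := fun i (_ : i ∈ Finset.Icc 1 n) =>
      MeasurableSpace.comap (r i) (inferInstance : MeasurableSpace ℝ)) i ?_
    have := Finset.mem_Icc.mp hi
    exact Finset.mem_Icc.mpr ⟨this.1, this.2.trans h⟩
  exact (comap_measurable (r i)).mono hle le_rfl

lemma comap_pbar_le_ratingsAlg (r : ℕ → Ω → ℝ) {m n : ℕ} (h : m ≤ n) :
    MeasurableSpace.comap (pbar r m) (inferInstance : MeasurableSpace ℝ) ≤ ratingsAlg r n :=
  (measurable_pbar_ratingsAlg r h).comap_le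

lemma integrable_r (hbw : Bandwagon μ p lam r) {n : ℕ} (hn : 1 ≤ n) :
    Integrable (r n) μ := by
  haveI := hbw.prob
  refine Integrable.mono' (integrable_const 1) (hbw.hmeas n).aestronglyMeasurable ?_
  filter_upwards with ω
  rcases hbw.hbin n hn ω with h | h <;> rw [h] <;> norm_num

lemma integrable_pbar (hbw : Bandwagon μ p lam r) (n : ℕ) :
    Integrable (pbar r n) μ := by
  have : pbar r n = fun ω => (∑ i ∈ Finset.Icc 1 n, r i ω) / n := rfl
  rw [this]
  exact (integrable_finset_sum _ fun i hi =>
    integrable_r hbw (Finset.mem_Icc.mp hi).1).div_const _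

lemma pbar_succ (r : ℕ → Ω → ℝ) {n : ℕ} (hn : 1 ≤ n) (ω : Ω) :
    pbar r (n + 1) ω = ((n : ℝ) / (n + 1)) * pbar r n ω + (1 / (n + 1)) * r (n + 1) ω := by
  have hn0 : (n : ℝ) ≠ 0 := by positivity
  have hn1 : (n : ℝ) + 1 ≠ 0 := by positivity
  simp only [pbar, Finset.sum_Icc_succ_top (by omega : 1 ≤ n + 1), Nat.cast_add, Nat.cast_one]
  field_simp

/-- Key induction: conditional expectation of `pbar r n` given `σ(pbar r m)`. -/
lemma condexp_pbar (hbw : Bandwagon μ p lam r) {m : ℕ} (hm : 1 ≤ m) :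
    ∀ n, m ≤ n → μ[pbar r n |
        MeasurableSpace.comap (pbar r m) (inferInstance : MeasurableSpace ℝ)]
      =ᵐ[μ] fun ω => p + (pbar r m ω - p) *
        ∏ i ∈ Finset.Icc (m + 1) n, (1 - lam i / (i : ℝ)) := by
  haveI := hbw.prob
  have hGle : MeasurableSpace.comap (pbar r m) (inferInstance : MeasurableSpace ℝ) ≤ mΩ :=
    (comap_pbar_le_ratingsAlg r le_rfl).trans (ratingsAlg_le_ambient hbw.hmeas m)
  refine Nat.le_induction ?_ ?_
  · -- base case n = m
    have hmeasG : StronglyMeasurable[(MeasurableSpace.comap (pbar r m) (inferInstance : MeasurableSpace ℝ))] (pbar r m) :=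
      (comap_measurable (pbar r m)).stronglyMeasurable
    have := condExp_of_stronglyMeasurable hGle hmeasG (integrable_pbar hbw m)
    rw [this]
    filter_upwards with ω
    simp [Finset.Icc_eq_empty_of_lt (by omega : m < m + 1)]
  · -- inductive step
    intro n hn IH
    have hn1 : 1 ≤ n := hm.trans hn
    have hFle : ratingsAlg r n ≤ mΩ := ratingsAlg_le_ambient hbw.hmeas n
    have hGF : (MeasurableSpace.comap (pbar r m) (inferInstance : MeasurableSpace ℝ)) ≤ ratingsAlg r n := comap_pbar_le_ratingsAlg r hn
    -- conditional expectation of r (n+1) given (MeasurableSpace.comap (pbar r m) (inferInstance : MeasurableSpace ℝ))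
    have hr_cond : μ[r (n + 1) | (MeasurableSpace.comap (pbar r m) (inferInstance : MeasurableSpace ℝ))] =ᵐ[μ]
        fun ω => lam (n + 1) * p + (1 - lam (n + 1)) *
          (p + (pbar r m ω - p) * ∏ i ∈ Finset.Icc (m + 1) n, (1 - lam i / (i : ℝ))) := by
      have tower : μ[μ[r (n + 1) | ratingsAlg r n] | (MeasurableSpace.comap (pbar r m) (inferInstance : MeasurableSpace ℝ))] =ᵐ[μ] μ[r (n + 1) | (MeasurableSpace.comap (pbar r m) (inferInstance : MeasurableSpace ℝ))] :=
        condExp_condExp_of_le hGF hFle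
      have hc := hbw.hcond (n + 1) (by omega)
      simp only [Nat.add_sub_cancel] at hc
      have step1 : μ[μ[r (n + 1) | ratingsAlg r n] | (MeasurableSpace.comap (pbar r m) (inferInstance : MeasurableSpace ℝ))] =ᵐ[μ]
          μ[fun ω => lam (n + 1) * p + (1 - lam (n + 1)) * pbar r n ω | (MeasurableSpace.comap (pbar r m) (inferInstance : MeasurableSpace ℝ))] :=
        condExp_congr_ae hc
      have hdecomp : (fun ω => lam (n + 1) * p + (1 - lam (n + 1)) * pbar r n ω)
          = (fun _ => lam (n + 1) * p) + (1 - lam (n + 1)) • pbar r n := by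
        funext ω; simp [mul_comm]
      have step2 : μ[fun ω => lam (n + 1) * p + (1 - lam (n + 1)) * pbar r n ω | (MeasurableSpace.comap (pbar r m) (inferInstance : MeasurableSpace ℝ))]
          =ᵐ[μ] (fun _ => lam (n + 1) * p) + (1 - lam (n + 1)) • μ[pbar r n | (MeasurableSpace.comap (pbar r m) (inferInstance : MeasurableSpace ℝ))] := by
        rw [hdecomp]
        refine (condExp_add (integrable_const _)
          ((integrable_pbar hbw n).smul (1 - lam (n + 1))) _).trans ?_
        refine EventuallyEq.add ?_ (condExp_smul _ _ _)
        rw [condExp_const hGle]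
      refine tower.symm.trans (step1.trans (step2.trans ?_))
      filter_upwards [IH] with ω hω
      simp only [Pi.add_apply, Pi.smul_apply, smul_eq_mul, hω]
    -- decompose pbar (n+1)
    have hdecomp : (pbar r (n + 1))
        = ((n : ℝ) / (n + 1)) • pbar r n + ((1 : ℝ) / (n + 1)) • r (n + 1) := by
      funext ω
      simp only [Pi.add_apply, Pi.smul_apply, smul_eq_mul]
      exact pbar_succ r hn1 ω
    have main : μ[pbar r (n + 1) | (MeasurableSpace.comap (pbar r m) (inferInstance : MeasurableSpace ℝ))] =ᵐ[μ]
        ((n : ℝ) / (n + 1)) • μ[pbar r n | (MeasurableSpace.comap (pbar r m) (inferInstance : MeasurableSpace ℝ))] + ((1 : ℝ) / (n + 1)) • μ[r (n + 1) | (MeasurableSpace.comap (pbar r m) (inferInstance : MeasurableSpace ℝ))] := by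
      rw [hdecomp]
      refine (condExp_add ((integrable_pbar hbw n).smul _)
        ((integrable_r hbw (by omega)).smul _) _).trans ?_
      exact EventuallyEq.add (condExp_smul _ _ _) (condExp_smul _ _ _)
    refine main.trans ?_
    filter_upwards [IH, hr_cond] with ω hω hrω
    simp only [Pi.add_apply, Pi.smul_apply, smul_eq_mul, hω, hrω]
    rw [Finset.prod_Icc_succ_top (by omega : m + 1 ≤ n + 1)]
    have hn1' : ((n : ℝ) + 1) ≠ 0 := by positivity
    push_cast
    field_simp
    ring

end Aux

theorem bandwagon_conditional_bias_sample_mean {Ω : Type*} [MeasurableSpace Ω] (μ : MeasureTheory.Measure Ω)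
    (p : ℝ) (lam : ℕ → ℝ) (r : ℕ → Ω → ℝ)
    (hbw : Bandwagon μ p lam r) :
    ∀ m n, 1 ≤ m → m < n →
      μ[fun ω => pbar r n ω - p |
        MeasurableSpace.comap (pbar r m) (inferInstance : MeasurableSpace ℝ)]
        =ᵐ[μ] fun ω => (pbar r m ω - p) *
          ∏ i ∈ Finset.Icc (m + 1) n, (1 - lam i / (i : ℝ)) := by
  intro m n hm hmn
  haveI := hbw.prob
  have hGle : MeasurableSpace.comap (pbar r m) (inferInstance : MeasurableSpace ℝ)
      ≤ ‹MeasurableSpace Ω› :=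
    (comap_pbar_le_ratingsAlg r le_rfl).trans (ratingsAlg_le_ambient hbw.hmeas m)
  have hsub : (fun ω => pbar r n ω - p) = pbar r n - (fun _ => p) := rfl
  have h1 : μ[fun ω => pbar r n ω - p |
        MeasurableSpace.comap (pbar r m) (inferInstance : MeasurableSpace ℝ)] =ᵐ[μ]
      μ[pbar r n | MeasurableSpace.comap (pbar r m) (inferInstance : MeasurableSpace ℝ)]
      - μ[(fun _ => p) | MeasurableSpace.comap (pbar r m) (inferInstance : MeasurableSpace ℝ)] := by
    rw [hsub]
    exact condExp_sub (integrable_pbar hbw n) (integrable_const p) _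
  refine h1.trans ?_
  rw [condExp_const hGle]
  filter_upwards [condexp_pbar hbw hm n hmn.le] with ω hω
  simp only [Pi.sub_apply, hω]
  ring
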